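/- Let a, b1, b2 be real numbers and c1, c2 > 0. Then for all real x, y with |x| + |y| < 1, one has F2(a; b1, b2; c1, c2; x, y) = Σ_{i=0}^∞ [(a)_i (b1)_i (b2)_i / ((c1)_i (c2)_i i!)] x^i y^i F(a+i, b1+i; c1+i; x) F(a+i, b2+i; c2+i; y), where all the series occurring converge absolutely. -/

import Mathlib

open scoped BigOperators
open Filter Set

/-- Pochhammer symbol `(a)_n = a (a+1) ⋯ (a+n-1)`. -/
noncomputable def poch (a : ℝ) (n : ℕ) : ℝ := ∏ k ∈ Finset.range n, (a + k)

/-- Gauss hypergeometric series `F(a,b;c;z)`. -/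
noncomputable def gaussF (a b c z : ℝ) : ℝ :=
  ∑' n : ℕ, poch a n * poch b n / (poch c n * (Nat.factorial n : ℝ)) * z ^ n

/-- Appell hypergeometric series `F2(a;b1,b2;c1,c2;x,y)`. -/
noncomputable def appellF2 (a b1 b2 c1 c2 x y : ℝ) : ℝ :=
  ∑' p : ℕ × ℕ, poch a (p.1 + p.2) * poch b1 p.1 * poch b2 p.2 /
    (poch c1 p.1 * poch c2 p.2 * (Nat.factorial p.1 : ℝ) * (Nat.factorial p.2 : ℝ)) *
    x ^ p.1 * y ^ p.2

noncomputable def k1 (α β : ℝ) : ℝ :=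
  2 ^ (2*α + 2*β) * Real.Gamma α * Real.Gamma β * Real.Gamma (α + β) /
    (4 * Real.pi * Real.Gamma (2*α) * Real.Gamma (2*β))

noncomputable def k2 (α β : ℝ) : ℝ :=
  2 ^ (2 - 2*α + 2*β) * Real.Gamma (1-α) * Real.Gamma β * Real.Gamma (1-α+β) /
    (4 * Real.pi * Real.Gamma (2-2*α) * Real.Gamma (2*β))

noncomputable def k3 (α β : ℝ) : ℝ :=
  2 ^ (2 + 2*α - 2*β) * Real.Gamma α * Real.Gamma (1-β) * Real.Gamma (1+α-β) /
    (4 * Real.pi * Real.Gamma (2*α) * Real.Gamma (2-2*β))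

noncomputable def k4 (α β : ℝ) : ℝ :=
  2 ^ (4 - 2*α - 2*β) * Real.Gamma (1-α) * Real.Gamma (1-β) * Real.Gamma (2-α-β) /
    (4 * Real.pi * Real.Gamma (2-2*α) * Real.Gamma (2-2*β))

/-- First fundamental solution `q1` of `H⁰_{α,β}`. -/
noncomputable def q1 (α β x y x0 y0 : ℝ) : ℝ :=
  let rr := (x - x0)^2 + (y - y0)^2
  let r1 := (x + x0)^2 + (y - y0)^2
  let r2 := (x - x0)^2 + (y + y0)^2
  let σ1 := 1 - rr / r1
  let σ2 := 1 - rr / r2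
  k1 α β * r1 ^ (-α) * r2 ^ (-β) *
    ∑' i : ℕ, poch (α+β) i * poch α i * poch β i /
      (poch (2*α) i * poch (2*β) i * (Nat.factorial i : ℝ)) * (σ1 * σ2) ^ i *
      gaussF (α-β) (α+i) (2*α+i) σ1 * gaussF (β-α) (β+i) (2*β+i) σ2

/-- Second fundamental solution `q2` of `H⁰_{α,β}`. -/
noncomputable def q2 (α β x y x0 y0 : ℝ) : ℝ :=
  let rr := (x - x0)^2 + (y - y0)^2
  let r1 := (x + x0)^2 + (y - y0)^2
  let r2 := (x - x0)^2 + (y + y0)^2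
  let σ1 := 1 - rr / r1
  let σ2 := 1 - rr / r2
  k2 α β * (x * x0) ^ (1-2*α) * r1 ^ (α-1) * r2 ^ (-β) *
    ∑' i : ℕ, poch (1-α+β) i * poch (1-α) i * poch β i /
      (poch (2-2*α) i * poch (2*β) i * (Nat.factorial i : ℝ)) * (σ1 * σ2) ^ i *
      gaussF (1-α-β) (1-α+i) (2-2*α+i) σ1 * gaussF (α+β-1) (β+i) (2*β+i) σ2

/-- Third fundamental solution `q3` of `H⁰_{α,β}`. -/
noncomputable def q3 (α β x y x0 y0 : ℝ) : ℝ :=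
  let rr := (x - x0)^2 + (y - y0)^2
  let r1 := (x + x0)^2 + (y - y0)^2
  let r2 := (x - x0)^2 + (y + y0)^2
  let σ1 := 1 - rr / r1
  let σ2 := 1 - rr / r2
  k3 α β * (y * y0) ^ (1-2*β) * r1 ^ (-α) * r2 ^ (β-1) *
    ∑' i : ℕ, poch (1+α-β) i * poch α i * poch (1-β) i /
      (poch (2*α) i * poch (2-2*β) i * (Nat.factorial i : ℝ)) * (σ1 * σ2) ^ i *
      gaussF (α+β-1) (α+i) (2*α+i) σ1 * gaussF (1-α-β) (1-β+i) (2-2*β+i) σ2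

/-- Fourth fundamental solution `q4` of `H⁰_{α,β}`. -/
noncomputable def q4 (α β x y x0 y0 : ℝ) : ℝ :=
  let rr := (x - x0)^2 + (y - y0)^2
  let r1 := (x + x0)^2 + (y - y0)^2
  let r2 := (x - x0)^2 + (y + y0)^2
  let σ1 := 1 - rr / r1
  let σ2 := 1 - rr / r2
  k4 α β * (x * x0) ^ (1-2*α) * (y * y0) ^ (1-2*β) * r1 ^ (α-1) * r2 ^ (β-1) *
    ∑' i : ℕ, poch (2-α-β) i * poch (1-α) i * poch (1-β) i /
      (poch (2-2*α) i * poch (2-2*β) i * (Nat.factorial i : ℝ)) * (σ1 * σ2) ^ i *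
      gaussF (β-α) (1-α+i) (2-2*α+i) σ1 * gaussF (α-β) (1-β+i) (2-2*β+i) σ2

section AppellAux

open scoped Nat

namespace AppellAux

lemma poch_zero (a : ℝ) : poch a 0 = 1 := by simp [poch]

lemma poch_succ (a : ℝ) (n : ℕ) : poch a (n+1) = poch a n * (a + n) :=
  Finset.prod_range_succ _ _

lemma poch_succ' (a : ℝ) (n : ℕ) : poch a (n+1) = a * poch (a+1) n := by
  rw [poch, Finset.prod_range_succ']
  simp only [Nat.cast_zero, add_zero]
  rw [mul_comm]
  congr 1
  refine Finset.prod_congr rfl fun k _ => ?_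
  push_cast; ring

lemma poch_add (a : ℝ) (m n : ℕ) : poch a (m + n) = poch a m * poch (a + m) n := by
  induction n with
  | zero => simp [poch_zero]
  | succ n ih =>
    have : m + (n + 1) = (m + n) + 1 := by omega
    rw [this, poch_succ, ih, poch_succ]
    push_cast; ring

lemma poch_pos {c : ℝ} (hc : 0 < c) (n : ℕ) : 0 < poch c n :=
  Finset.prod_pos fun k _ => by positivity

lemma poch_nonneg {A : ℝ} (hA : 0 ≤ A) (n : ℕ) : 0 ≤ poch A n :=
  Finset.prod_nonneg fun k _ => by positivity

lemma poch_le_poch {A B : ℝ} (hA : 0 ≤ A) (hAB : A ≤ B) (n : ℕ) : poch A n ≤ poch B n :=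
  Finset.prod_le_prod (fun k _ => by positivity) (fun k _ => by linarith)

lemma abs_poch_le (a : ℝ) (n : ℕ) : |poch a n| ≤ poch |a| n := by
  rw [poch, poch, Finset.abs_prod]
  refine Finset.prod_le_prod (fun k _ => abs_nonneg _) (fun k _ => ?_)
  have h := abs_add_le a (k:ℝ)
  rw [Nat.abs_cast] at h
  exact h

lemma poch_one_eq (n : ℕ) : poch 1 n = n ! := by
  induction n with
  | zero => simp [poch_zero]
  | succ n ih => rw [poch_succ, ih, Nat.factorial_succ]; push_cast; ring

lemma poch_shift (p K : ℕ) : ((p:ℝ)+1) * poch ((p:ℝ)+2) K = ((p:ℝ)+1+K) * poch ((p:ℝ)+1) K := by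
  induction K with
  | zero => simp [poch_zero]
  | succ K ih =>
    rw [poch_succ, poch_succ]
    push_cast
    nlinarith [ih]

lemma poch_nat_le (p K : ℕ) : poch ((p:ℝ)+1) K ≤ K ! * ((K:ℝ)+1)^p := by
  induction p with
  | zero => simp [poch_one_eq]
  | succ p ih =>
    have hpos : (0:ℝ) < (p:ℝ)+1 := by positivity
    rw [← mul_le_mul_iff_right₀ hpos]
    have hcast : ((p:ℕ)+1 : ℕ) = p + 1 := rfl
    have h1 : ((p:ℝ)+1) * poch (((p+1:ℕ):ℝ)+1) K = ((p:ℝ)+1+K) * poch ((p:ℝ)+1) K := by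
      push_cast
      have := poch_shift p K
      convert this using 3 <;> ring
    rw [h1]
    have h2 : ((p:ℝ)+1+K) * poch ((p:ℝ)+1) K ≤ ((p:ℝ)+1+K) * (K ! * ((K:ℝ)+1)^p) := by
      apply mul_le_mul_of_nonneg_left ih (by positivity)
    refine h2.trans ?_
    have h3 : ((p:ℝ)+1+K) ≤ ((p:ℝ)+1) * ((K:ℝ)+1) := by nlinarith [Nat.cast_nonneg (α := ℝ) p, Nat.cast_nonneg (α := ℝ) K]
    calc ((p:ℝ)+1+K) * (K ! * ((K:ℝ)+1)^p) ≤ ((p:ℝ)+1) * ((K:ℝ)+1) * (K ! * ((K:ℝ)+1)^p) := by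
          apply mul_le_mul_of_nonneg_right h3 (by positivity)
      _ = ((p:ℝ)+1) * (K ! * ((K:ℝ)+1)^(p+1)) := by ring
      _ = ((p:ℝ)+1) * (K ! * ((K:ℝ)+1)^((p+1:ℕ))) := by norm_cast

lemma abs_poch_le_poly {u : ℝ} {p : ℕ} (h : |u| ≤ (p:ℝ)+1) (n : ℕ) :
    |poch u n| ≤ n ! * ((n:ℝ)+1)^p :=
  ((abs_poch_le u n).trans (poch_le_poch (abs_nonneg u) h n)).trans (poch_nat_le p n)

lemma poch_den {c : ℝ} (hc : 0 < c) (K : ℕ) :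
    min c 1 * (K ! : ℝ) ≤ ((K:ℝ)+1) * poch c K := by
  cases K with
  | zero => simpa [poch_zero] using min_le_right c 1
  | succ K =>
    have h1 : poch 1 K ≤ poch (c+1) K := poch_le_poch zero_le_one (by linarith) K
    rw [poch_one_eq] at h1
    have h2 : poch c (K+1) = c * poch (c+1) K := poch_succ' c K
    have hK : (0:ℝ) ≤ (K ! : ℝ) := by positivity
    have hfs : ((K+1:ℕ) ! : ℝ) = ((K:ℝ)+1) * (K ! : ℝ) := by
      rw [Nat.factorial_succ]; push_cast; ring
    rw [hfs, h2]
    push_cast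
    have hK1 : (0:ℝ) ≤ (K:ℝ)+1 := by positivity
    have hmin : min c 1 ≤ c := min_le_left _ _
    have hminn : 0 ≤ min c 1 := le_min (le_of_lt hc) zero_le_one
    have hA : min c 1 * ((K:ℝ)+1) * (K ! : ℝ) ≤ c * ((K:ℝ)+1) * (K ! : ℝ) := by
      apply mul_le_mul_of_nonneg_right (mul_le_mul_of_nonneg_right hmin hK1) hK
    have hB : ((K:ℝ)+1) * (c * (K ! : ℝ)) ≤ ((K:ℝ)+1) * (c * poch (c+1) K) := by
      apply mul_le_mul_of_nonneg_left (mul_le_mul_of_nonneg_left h1 hc.le) hK1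
    have hP : 0 ≤ c * poch (c+1) K := mul_nonneg hc.le (poch_nonneg (by linarith) K)
    nlinarith [hA, hB, hP]


lemma poch_le_poly {u : ℝ} {p : ℕ} (hu : 0 ≤ u) (h : u ≤ (p:ℝ)+1) (n : ℕ) :
    poch u n ≤ n ! * ((n:ℝ)+1)^p := by
  have := abs_poch_le_poly (u := u) (p := p) (by rwa [abs_of_nonneg hu]) n
  rwa [← abs_of_nonneg (poch_nonneg hu n)]

lemma summable_poly_geo (e : ℕ) {t : ℝ} (h0 : 0 ≤ t) (h1 : t < 1) :
    Summable (fun K : ℕ => ((K:ℝ)+1)^e * t^K) := by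
  have hs1 : Summable (fun K : ℕ => (2:ℝ)^e * ((K:ℝ)^e * t^K)) := by
    apply Summable.mul_left
    exact summable_pow_mul_geometric_of_norm_lt_one e (by rwa [Real.norm_eq_abs, abs_of_nonneg h0])
  have hs2 : Summable (fun K : ℕ => (2:ℝ)^e * t^K) := by
    apply Summable.mul_left
    exact summable_geometric_of_lt_one h0 h1
  apply Summable.of_nonneg_of_le (fun K => by positivity) (fun K => ?_) (hs1.add hs2)
  have hb : ((K:ℝ)+1)^e ≤ (2:ℝ)^e * (K:ℝ)^e + 2^e := by
    rcases Nat.eq_zero_or_pos K with h | h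
    · subst h
      simp only [Nat.cast_zero, zero_add, one_pow]
      have hh1 : (1:ℝ) ≤ 2^e := one_le_pow₀ (by norm_num)
      nlinarith [pow_nonneg (le_refl (0:ℝ)) e, pow_nonneg (by norm_num : (0:ℝ) ≤ 2) e]
    · have hK1 : (1:ℝ) ≤ (K:ℝ) := by exact_mod_cast h
      have : ((K:ℝ)+1)^e ≤ (2*(K:ℝ))^e := by
        apply pow_le_pow_left₀ (by positivity); linarith
      rw [mul_pow] at this
      nlinarith [pow_nonneg (by positivity : (0:ℝ) ≤ 2*(K:ℝ)) e, pow_pos (by norm_num : (0:ℝ) < 2) e]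
  have ht : (0:ℝ) ≤ t^K := by positivity
  calc ((K:ℝ)+1)^e * t^K ≤ ((2:ℝ)^e * (K:ℝ)^e + 2^e) * t^K := by
        apply mul_le_mul_of_nonneg_right hb ht
    _ = (2:ℝ)^e * ((K:ℝ)^e * t^K) + 2^e * t^K := by ring

lemma choose_binom_le {s1 s2 : ℝ} (h1 : 0 ≤ s1) (h2 : 0 ≤ s2) (M N : ℕ) :
    ((M+N).choose M : ℝ) * s1^M * s2^N ≤ (s1+s2)^(M+N) := by
  rw [add_pow]
  have hmem : M ∈ Finset.range (M+N+1) := by simp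
  have := Finset.single_le_sum
    (f := fun k => s1^k * s2^(M+N-k) * ((M+N).choose k : ℝ))
    (fun k _ => by positivity) hmem
  simpa [Nat.add_sub_cancel_left, mul_comm, mul_assoc, mul_left_comm] using this

/-- Core summability of the dominating double series. -/
lemma core {A B1 B2 c1 c2 s1 s2 : ℝ} (hA : 0 ≤ A) (hB1 : 0 ≤ B1) (hB2 : 0 ≤ B2)
    (hc1 : 0 < c1) (hc2 : 0 < c2) (hs1 : 0 ≤ s1) (hs2 : 0 ≤ s2) (hst : s1 + s2 < 1) :
    Summable (fun p : ℕ × ℕ => poch A (p.1+p.2) * poch B1 p.1 * poch B2 p.2 /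
      (poch c1 p.1 * poch c2 p.2 * ((p.1)! : ℝ) * ((p.2)! : ℝ)) * s1 ^ p.1 * s2 ^ p.2) := by
  set p : ℕ := max (max ⌈A⌉₊ ⌈B1⌉₊) ⌈B2⌉₊ with hp
  set γ : ℝ := min (min c1 c2) 1 with hγ
  have hγ0 : 0 < γ := lt_min (lt_min hc1 hc2) one_pos
  set t : ℝ := s1 + s2 with ht
  have ht0 : 0 ≤ t := by positivity
  have hApoly : A ≤ (p:ℝ)+1 := by
    have := Nat.le_ceil A
    have h2 : (⌈A⌉₊ : ℝ) ≤ (p : ℝ) := by exact_mod_cast le_max_of_le_left (le_max_left _ _)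
    linarith
  have hB1poly : B1 ≤ (p:ℝ)+1 := by
    have := Nat.le_ceil B1
    have h2 : (⌈B1⌉₊ : ℝ) ≤ (p : ℝ) := by exact_mod_cast le_max_of_le_left (le_max_right _ _)
    linarith
  have hB2poly : B2 ≤ (p:ℝ)+1 := by
    have := Nat.le_ceil B2
    have h2 : (⌈B2⌉₊ : ℝ) ≤ (p : ℝ) := by exact_mod_cast le_max_right _ _
    linarith
  set f : ℕ → ℝ := fun K => γ⁻¹ * (((K:ℝ)+1)^(2*p+1) * t^K) with hf
  have hfs : Summable f := (summable_poly_geo (2*p+1) ht0 hst).mul_left _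
  have hff : Summable (fun q : ℕ × ℕ => f q.1 * f q.2) :=
    Summable.mul_of_nonneg hfs hfs (fun K => by positivity) (fun K => by positivity)
  apply Summable.of_nonneg_of_le ?_ ?_ hff
  · intro q
    have := poch_nonneg hA (q.1+q.2)
    have := poch_nonneg hB1 q.1
    have := poch_nonneg hB2 q.2
    have := poch_pos hc1 q.1
    have := poch_pos hc2 q.2
    positivity
  · rintro ⟨M, N⟩
    simp only
    have hD : 0 < poch c1 M * poch c2 N * ((M)! : ℝ) * ((N)! : ℝ) := by
      have := poch_pos hc1 M
      have := poch_pos hc2 N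
      positivity
    have hMN : (0:ℝ) ≤ ((M:ℝ)+1) := by positivity
    have hNN : (0:ℝ) ≤ ((N:ℝ)+1) := by positivity
    have hCfac : (((M+N)!) : ℝ) = ((M+N).choose M : ℝ) * ((M)! : ℝ) * ((N)! : ℝ) := by
      have h := Nat.choose_mul_factorial_mul_factorial (Nat.le_add_right M N)
      rw [Nat.add_sub_cancel_left] at h
      exact_mod_cast h.symm
    have hA1 : poch A (M+N) ≤ ((M+N).choose M : ℝ) * ((M)! : ℝ) * ((N)! : ℝ) *
        (((M:ℝ)+1)*((N:ℝ)+1))^p := by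
      refine (poch_le_poly hA hApoly (M+N)).trans ?_
      rw [hCfac]
      have hexp : (((M+N:ℕ):ℝ)+1)^p ≤ (((M:ℝ)+1)*((N:ℝ)+1))^p := by
        apply pow_le_pow_left₀ (by positivity)
        push_cast
        nlinarith [Nat.cast_nonneg (α := ℝ) M, Nat.cast_nonneg (α := ℝ) N]
      calc ((M+N).choose M : ℝ) * ((M)! : ℝ) * ((N)! : ℝ) * (((M+N:ℕ):ℝ)+1)^p
          ≤ ((M+N).choose M : ℝ) * ((M)! : ℝ) * ((N)! : ℝ) * ((((M:ℝ)+1)*((N:ℝ)+1))^p) := by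
            apply mul_le_mul_of_nonneg_left hexp (by positivity)
        _ = _ := by ring
    have hB1b : poch B1 M ≤ ((M)! : ℝ) * (((M:ℝ)+1))^p := poch_le_poly hB1 hB1poly M
    have hB2b : poch B2 N ≤ ((N)! : ℝ) * (((N:ℝ)+1))^p := poch_le_poly hB2 hB2poly N
    have hγc1 : γ ≤ min c1 1 := le_min ((min_le_left _ _).trans (min_le_left _ _)) (min_le_right _ _)
    have hγc2 : γ ≤ min c2 1 := le_min ((min_le_left _ _).trans (min_le_right _ _)) (min_le_right _ _)
    have hden1 : γ * ((M)! : ℝ) ≤ ((M:ℝ)+1) * poch c1 M :=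
      (mul_le_mul_of_nonneg_right hγc1 (by positivity)).trans (poch_den hc1 M)
    have hden2 : γ * ((N)! : ℝ) ≤ ((N:ℝ)+1) * poch c2 N :=
      (mul_le_mul_of_nonneg_right hγc2 (by positivity)).trans (poch_den hc2 N)
    have hCb : ((M+N).choose M : ℝ) * s1^M * s2^N ≤ t^M * t^N := by
      have h := choose_binom_le hs1 hs2 M N
      rwa [← ht, pow_add] at h
    have hpA := poch_nonneg hA (M+N)
    have hpB1 := poch_nonneg hB1 M
    have hpB2 := poch_nonneg hB2 N
    have key : ((γ*((M:ℝ)+1)) * (γ*((N:ℝ)+1))) *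
        (poch A (M+N) * poch B1 M * poch B2 N * s1^M * s2^N) ≤
        ((γ*((M:ℝ)+1)) * (γ*((N:ℝ)+1))) *
        (f M * f N * (poch c1 M * poch c2 N * ((M)! : ℝ) * ((N)! : ℝ))) := by
      have hs1M : (0:ℝ) ≤ s1^M := by positivity
      have hs2N : (0:ℝ) ≤ s2^N := by positivity
      calc ((γ*((M:ℝ)+1)) * (γ*((N:ℝ)+1))) *
          (poch A (M+N) * poch B1 M * poch B2 N * s1^M * s2^N)
          ≤ ((γ*((M:ℝ)+1)) * (γ*((N:ℝ)+1))) *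
            ((((M+N).choose M : ℝ) * ((M)! : ℝ) * ((N)! : ℝ) * (((M:ℝ)+1)*((N:ℝ)+1))^p) *
             (((M)! : ℝ) * (((M:ℝ)+1))^p) * (((N)! : ℝ) * (((N:ℝ)+1))^p) * s1^M * s2^N) := by
            apply mul_le_mul_of_nonneg_left _ (by positivity)
            apply mul_le_mul_of_nonneg_right _ hs2N
            apply mul_le_mul_of_nonneg_right _ hs1M
            apply mul_le_mul (mul_le_mul hA1 hB1b hpB1 (by positivity)) hB2b hpB2 (by positivity)
        _ = (γ * ((M)! : ℝ)) * (γ * ((N)! : ℝ)) *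
            ((((M+N).choose M : ℝ) * s1^M * s2^N) *
             (((M:ℝ)+1)^(2*p+1) * ((N:ℝ)+1)^(2*p+1) * ((M)! : ℝ) * ((N)! : ℝ))) := by
            rw [mul_pow]; ring
        _ ≤ (((M:ℝ)+1) * poch c1 M) * (((N:ℝ)+1) * poch c2 N) *
            ((((M+N).choose M : ℝ) * s1^M * s2^N) *
             (((M:ℝ)+1)^(2*p+1) * ((N:ℝ)+1)^(2*p+1) * ((M)! : ℝ) * ((N)! : ℝ))) := by
            apply mul_le_mul_of_nonneg_right (mul_le_mul hden1 hden2 (by positivity) ?_) (by positivity)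
            have := poch_pos hc1 M
            positivity
        _ ≤ (((M:ℝ)+1) * poch c1 M) * (((N:ℝ)+1) * poch c2 N) *
            ((t^M * t^N) *
             (((M:ℝ)+1)^(2*p+1) * ((N:ℝ)+1)^(2*p+1) * ((M)! : ℝ) * ((N)! : ℝ))) := by
            have := poch_pos hc1 M
            have := poch_pos hc2 N
            apply mul_le_mul_of_nonneg_left (mul_le_mul_of_nonneg_right hCb (by positivity)) (by positivity)
        _ = ((γ*((M:ℝ)+1)) * (γ*((N:ℝ)+1))) *
            (f M * f N * (poch c1 M * poch c2 N * ((M)! : ℝ) * ((N)! : ℝ))) := by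
            rw [hf]
            field_simp
    have key2 : poch A (M+N) * poch B1 M * poch B2 N * s1^M * s2^N ≤
        f M * f N * (poch c1 M * poch c2 N * ((M)! : ℝ) * ((N)! : ℝ)) := by
      have hpos : 0 < (γ*((M:ℝ)+1)) * (γ*((N:ℝ)+1)) := by positivity
      exact le_of_mul_le_mul_left (by simpa [mul_assoc] using key) hpos
    have heq : poch A (M+N) * poch B1 M * poch B2 N /
        (poch c1 M * poch c2 N * ((M)! : ℝ) * ((N)! : ℝ)) * s1 ^ M * s2 ^ N =
        (poch A (M+N) * poch B1 M * poch B2 N * s1^M * s2^N) /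
        (poch c1 M * poch c2 N * ((M)! : ℝ) * ((N)! : ℝ)) := by ring
    rw [heq, div_le_iff₀ hD]
    exact key2


lemma gauss_summable {u v c z : ℝ} (hc : 0 < c) (hz : |z| < 1) :
    Summable (fun n : ℕ => |poch u n * poch v n / (poch c n * (n ! : ℝ)) * z ^ n|) := by
  set p : ℕ := max ⌈|u|⌉₊ ⌈|v|⌉₊ with hp
  set γ : ℝ := min c 1 with hγ
  have hγ0 : 0 < γ := lt_min hc one_pos
  have hupoly : |u| ≤ (p:ℝ)+1 := by
    have := Nat.le_ceil |u|
    have h2 : (⌈|u|⌉₊ : ℝ) ≤ (p : ℝ) := by exact_mod_cast le_max_left _ _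
    linarith
  have hvpoly : |v| ≤ (p:ℝ)+1 := by
    have := Nat.le_ceil |v|
    have h2 : (⌈|v|⌉₊ : ℝ) ≤ (p : ℝ) := by exact_mod_cast le_max_right _ _
    linarith
  set f : ℕ → ℝ := fun n => γ⁻¹ * (((n:ℝ)+1)^(2*p+1) * |z|^n) with hf
  have hfs : Summable f := (summable_poly_geo (2*p+1) (abs_nonneg z) hz).mul_left _
  apply Summable.of_nonneg_of_le (fun n => abs_nonneg _) (fun n => ?_) hfs
  have hden : 0 < poch c n * (n ! : ℝ) := by
    have := poch_pos hc n
    positivity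
  have habs : |poch u n * poch v n / (poch c n * (n ! : ℝ)) * z ^ n| =
      |poch u n| * |poch v n| / (poch c n * (n ! : ℝ)) * |z| ^ n := by
    rw [abs_mul, abs_div, abs_mul, abs_pow, abs_of_pos hden]
  rw [habs]
  have hu1 : |poch u n| ≤ (n ! : ℝ) * ((n:ℝ)+1)^p := abs_poch_le_poly hupoly n
  have hv1 : |poch v n| ≤ (n ! : ℝ) * ((n:ℝ)+1)^p := abs_poch_le_poly hvpoly n
  have hden1 : γ * ((n)! : ℝ) ≤ ((n:ℝ)+1) * poch c n := poch_den hc n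
  have key : (γ*((n:ℝ)+1)) * (|poch u n| * |poch v n| * |z|^n) ≤
      (γ*((n:ℝ)+1)) * (f n * (poch c n * (n ! : ℝ))) := by
    calc (γ*((n:ℝ)+1)) * (|poch u n| * |poch v n| * |z|^n)
        ≤ (γ*((n:ℝ)+1)) * (((n ! : ℝ) * ((n:ℝ)+1)^p) * ((n ! : ℝ) * ((n:ℝ)+1)^p) * |z|^n) := by
          apply mul_le_mul_of_nonneg_left _ (by positivity)
          apply mul_le_mul_of_nonneg_right _ (by positivity)
          exact mul_le_mul hu1 hv1 (abs_nonneg _) (by positivity)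
      _ = (γ * (n ! : ℝ)) * (((n:ℝ)+1)^(2*p+1) * |z|^n * (n ! : ℝ)) := by ring
      _ ≤ (((n:ℝ)+1) * poch c n) * (((n:ℝ)+1)^(2*p+1) * |z|^n * (n ! : ℝ)) := by
          apply mul_le_mul_of_nonneg_right hden1 (by positivity)
      _ = (γ*((n:ℝ)+1)) * (f n * (poch c n * (n ! : ℝ))) := by
          rw [hf]; field_simp
  have key2 : |poch u n| * |poch v n| * |z|^n ≤ f n * (poch c n * (n ! : ℝ)) :=
    le_of_mul_le_mul_left key (by positivity)
  have heq : |poch u n| * |poch v n| / (poch c n * (n ! : ℝ)) * |z| ^ n =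
      (|poch u n| * |poch v n| * |z|^n) / (poch c n * (n ! : ℝ)) := by ring
  rw [heq, div_le_iff₀ hden]
  exact key2


/-- Key Vandermonde-type identity. -/
lemma key_ident (M : ℕ) : ∀ (N : ℕ) (a : ℝ),
    ∑ i ∈ Finset.range (N+1), (M.choose i : ℝ) * (N.choose i : ℝ) * (i ! : ℝ) *
      poch (a + i) (N - i) = poch (a + M) N := by
  induction M with
  | zero =>
    intro N a
    rw [Finset.sum_eq_single 0]
    · simp [poch]
    · intro i _ hi
      obtain ⟨j, rfl⟩ := Nat.exists_eq_succ_of_ne_zero hi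
      simp [Nat.choose_eq_zero_of_lt (Nat.succ_pos j)]
    · intro h; simp at h
  | succ M ih =>
    intro N a
    cases N with
    | zero => simp [poch_zero]
    | succ N =>
      rw [Finset.sum_range_succ']
      simp only [Nat.choose_zero_right, Nat.cast_one, Nat.factorial_zero, Nat.cast_zero,
        add_zero, Nat.sub_zero, one_mul, mul_one]
      have hsplit : ∀ j ∈ Finset.range (N+1),
          ((M+1).choose (j+1) : ℝ) * ((N+1).choose (j+1) : ℝ) * ((j+1)! : ℝ) *
            poch (a + ((j+1 : ℕ) : ℝ)) (N + 1 - (j+1)) =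
          (M.choose j : ℝ) * ((N+1).choose (j+1) : ℝ) * ((j+1)! : ℝ) *
            poch (a + ((j+1 : ℕ) : ℝ)) (N - j) +
          (M.choose (j+1) : ℝ) * ((N+1).choose (j+1) : ℝ) * ((j+1)! : ℝ) *
            poch (a + ((j+1 : ℕ) : ℝ)) (N - j) := by
        intro j _
        have hpascal : ((M+1).choose (j+1) : ℝ) = (M.choose j : ℝ) + (M.choose (j+1) : ℝ) := by
          exact_mod_cast Nat.choose_succ_succ M j
        rw [Nat.succ_sub_succ, hpascal]; ring
      rw [Finset.sum_congr rfl hsplit, Finset.sum_add_distrib]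
      -- second piece + the i = 0 term reassembles to ih at (N+1, a)
      have hsecond : (∑ j ∈ Finset.range (N+1),
          (M.choose (j+1) : ℝ) * ((N+1).choose (j+1) : ℝ) * ((j+1)! : ℝ) *
            poch (a + ((j+1 : ℕ) : ℝ)) (N - j)) + poch a (N+1) = poch (a + M) (N+1) := by
        have h := ih (N+1) a
        rw [Finset.sum_range_succ'] at h
        simp only [Nat.choose_zero_right, Nat.cast_one, Nat.factorial_zero, Nat.cast_zero,
          add_zero, Nat.sub_zero, one_mul, mul_one, Nat.succ_sub_succ] at h
        exact h
      -- first piece equals (N+1) * poch (a+1+M) N by ih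
      have hfirst : (∑ j ∈ Finset.range (N+1),
          (M.choose j : ℝ) * ((N+1).choose (j+1) : ℝ) * ((j+1)! : ℝ) *
            poch (a + ((j+1 : ℕ) : ℝ)) (N - j)) = ((N:ℝ)+1) * poch ((a+1) + M) N := by
        rw [← ih N (a+1), Finset.mul_sum]
        refine Finset.sum_congr rfl fun j hj => ?_
        have h := Nat.add_one_mul_choose_eq N j
        have h' : ((N:ℝ)+1) * (N.choose j : ℝ) = ((N+1).choose (j+1) : ℝ) * ((j:ℝ)+1) := by
          exact_mod_cast h
        have hfac : (((j+1))! : ℝ) = ((j:ℝ)+1) * (j ! : ℝ) := by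
          rw [Nat.factorial_succ]; push_cast; ring
        have hpoch : poch (a + ((j+1 : ℕ) : ℝ)) (N - j) = poch ((a+1) + (j:ℝ)) (N - j) := by
          congr 1; push_cast; ring
        rw [hpoch, hfac]
        linear_combination (-(M.choose j : ℝ) * (j ! : ℝ) * poch ((a+1) + (j:ℝ)) (N - j)) * h'
      rw [add_assoc, hsecond, hfirst]
      have hb : a + ((M+1 : ℕ) : ℝ) = (a + (M:ℝ)) + 1 := by push_cast; ring
      have he : (a+1) + (M:ℝ) = (a + (M:ℝ)) + 1 := by ring
      rw [hb, he, poch_succ' (a + (M:ℝ)) N, poch_succ ((a + (M:ℝ))+1) N]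
      push_cast
      ring

/-- The triple-indexed term. -/
noncomputable def Tfun (a b1 b2 c1 c2 x y : ℝ) (q : ℕ × ℕ × ℕ) : ℝ :=
  (poch a q.1 * poch b1 q.1 * poch b2 q.1 /
      (poch c1 q.1 * poch c2 q.1 * (q.1 ! : ℝ)) * x ^ q.1 * y ^ q.1) *
  (poch (a + q.1) q.2.1 * poch (b1 + q.1) q.2.1 /
      (poch (c1 + q.1) q.2.1 * (q.2.1 ! : ℝ)) * x ^ q.2.1) *
  (poch (a + q.1) q.2.2 * poch (b2 + q.1) q.2.2 /
      (poch (c2 + q.1) q.2.2 * (q.2.2 ! : ℝ)) * y ^ q.2.2)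

/-- The regrouped term, indexed by `((M, N), i)`. -/
noncomputable def Ufun (a b1 b2 c1 c2 x y : ℝ) (p : (ℕ × ℕ) × ℕ) : ℝ :=
  if p.2 ≤ p.1.1 ∧ p.2 ≤ p.1.2 then
    Tfun a b1 b2 c1 c2 x y (p.2, p.1.1 - p.2, p.1.2 - p.2) else 0

lemma fin_sum (a b1 b2 c1 c2 x y : ℝ) (hc1 : 0 < c1) (hc2 : 0 < c2) (M N : ℕ) :
    ∑ i ∈ Finset.range (N+1), Ufun a b1 b2 c1 c2 x y ((M, N), i) =
    poch a (M+N) * poch b1 M * poch b2 N /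
      (poch c1 M * poch c2 N * (M ! : ℝ) * (N ! : ℝ)) * x ^ M * y ^ N := by
  have hterm : ∀ i ∈ Finset.range (N+1), Ufun a b1 b2 c1 c2 x y ((M, N), i) =
      ((M.choose i : ℝ) * (N.choose i : ℝ) * (i ! : ℝ) * poch (a + i) (N - i)) *
      (poch a M * poch b1 M * poch b2 N /
        (poch c1 M * poch c2 N * (M ! : ℝ) * (N ! : ℝ)) * x ^ M * y ^ N) := by
    intro i hi
    have hiN : i ≤ N := by simp at hi; omega
    by_cases hiM : i ≤ M
    · rw [Ufun, if_pos ⟨hiM, hiN⟩]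
      obtain ⟨m, rfl⟩ : ∃ m, M = i + m := ⟨M - i, by omega⟩
      obtain ⟨n, rfl⟩ : ∃ n, N = i + n := ⟨N - i, by omega⟩
      simp only [Tfun, Nat.add_sub_cancel_left]
      -- expand everything
      have e1 : poch a (i + m) = poch a i * poch (a + i) m := poch_add a i m
      have e2 : poch b1 (i + m) = poch b1 i * poch (b1 + i) m := poch_add b1 i m
      have e3 : poch b2 (i + n) = poch b2 i * poch (b2 + i) n := poch_add b2 i n
      have e4 : poch c1 (i + m) = poch c1 i * poch (c1 + i) m := poch_add c1 i m
      have e5 : poch c2 (i + n) = poch c2 i * poch (c2 + i) n := poch_add c2 i n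
      have hf1 : (((i+m)!) : ℝ) = ((i+m).choose i : ℝ) * (i ! : ℝ) * (m ! : ℝ) := by
        have h := Nat.choose_mul_factorial_mul_factorial (Nat.le_add_right i m)
        rw [Nat.add_sub_cancel_left] at h
        exact_mod_cast h.symm
      have hf2 : (((i+n)!) : ℝ) = ((i+n).choose i : ℝ) * (i ! : ℝ) * (n ! : ℝ) := by
        have h := Nat.choose_mul_factorial_mul_factorial (Nat.le_add_right i n)
        rw [Nat.add_sub_cancel_left] at h
        exact_mod_cast h.symm
      have hpc1i : poch c1 i ≠ 0 := (poch_pos hc1 i).ne'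
      have hpc2i : poch c2 i ≠ 0 := (poch_pos hc2 i).ne'
      have hpc1m : poch (c1 + i) m ≠ 0 := (poch_pos (by positivity) m).ne'
      have hpc2n : poch (c2 + i) n ≠ 0 := (poch_pos (by positivity) n).ne'
      have hfi : (i ! : ℝ) ≠ 0 := by positivity
      have hfm : (m ! : ℝ) ≠ 0 := by positivity
      have hfn : (n ! : ℝ) ≠ 0 := by positivity
      have hch1 : ((i+m).choose i : ℝ) ≠ 0 := by
        have := Nat.choose_pos (Nat.le_add_right i m)
        positivity
      have hch2 : ((i+n).choose i : ℝ) ≠ 0 := by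
        have := Nat.choose_pos (Nat.le_add_right i n)
        positivity
      rw [e1, e2, e3, e4, e5, hf1, hf2]
      have hx : x ^ (i + m) = x ^ i * x ^ m := pow_add x i m
      have hy : y ^ (i + n) = y ^ i * y ^ n := pow_add y i n
      rw [hx, hy]
      generalize (i ! : ℝ) = fi at *
      generalize (m ! : ℝ) = fm at *
      generalize (n ! : ℝ) = fn at *
      generalize ((i+m).choose i : ℝ) = C1 at *
      generalize ((i+n).choose i : ℝ) = C2 at *
      generalize poch c1 i = P1 at *
      generalize poch c2 i = P2 at *
      generalize poch (c1 + i) m = P3 at *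
      generalize poch (c2 + i) n = P4 at *
      generalize poch a i = A1 at *
      generalize poch (a + i) m = A2 at *
      generalize poch (a + i) n = A3 at *
      generalize poch b1 i = B1 at *
      generalize poch (b1 + i) m = B2 at *
      generalize poch b2 i = B3 at *
      generalize poch (b2 + i) n = B4 at *
      generalize x ^ i = X1 at *
      generalize x ^ m = X2 at *
      generalize y ^ i = Y1 at *
      generalize y ^ n = Y2 at *
      have h1 := mul_inv_cancel₀ hch1
      have h2 := mul_inv_cancel₀ hch2
      have h3 := mul_inv_cancel₀ hfi
      linear_combination
        (-(A1 * B1 * B3 / (P1 * P2 * fi) * X1 * Y1 * (A2 * B2 / (P3 * fm) * X2) *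
          (A3 * B4 / (P4 * fn) * Y2))) * h1 -
        (A1 * B1 * B3 / (P1 * P2 * fi) * X1 * Y1 * (A2 * B2 / (P3 * fm) * X2) *
          (A3 * B4 / (P4 * fn) * Y2) * (C1 * C1⁻¹)) * h2 -
        (A1 * B1 * B3 / (P1 * P2 * fi) * X1 * Y1 * (A2 * B2 / (P3 * fm) * X2) *
          (A3 * B4 / (P4 * fn) * Y2) * (C1 * C1⁻¹) * (C2 * C2⁻¹)) * h3
    · rw [Ufun, if_neg (by tauto)]
      have : (M.choose i : ℝ) = 0 := by
        rw [Nat.choose_eq_zero_of_lt (by omega)]; norm_cast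
      rw [this]
      ring
  rw [Finset.sum_congr rfl hterm, ← Finset.sum_mul, key_ident M N a, poch_add a M N]
  ring


lemma Ufun_eq_zero (a b1 b2 c1 c2 x y : ℝ) (M N i : ℕ) (h : ¬ i < N + 1) :
    Ufun a b1 b2 c1 c2 x y ((M, N), i) = 0 := by
  rw [Ufun, if_neg]
  rintro ⟨-, h2⟩
  simp only [Prod.snd] at h2
  omega

lemma bracket_nonneg {u v c z : ℝ} (hu : 0 ≤ u) (hv : 0 ≤ v) (hc : 0 < c) (hz : 0 ≤ z) (m : ℕ) :
    0 ≤ poch u m * poch v m / (poch c m * (m ! : ℝ)) * z ^ m := by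
  apply mul_nonneg _ (pow_nonneg hz m)
  apply div_nonneg (mul_nonneg (poch_nonneg hu m) (poch_nonneg hv m))
  exact mul_nonneg (poch_pos hc m).le (by positivity)

lemma bracket1_nonneg {u v w c d z1 z2 : ℝ} (hu : 0 ≤ u) (hv : 0 ≤ v) (hw : 0 ≤ w)
    (hc : 0 < c) (hd : 0 < d) (hz1 : 0 ≤ z1) (hz2 : 0 ≤ z2) (i : ℕ) :
    0 ≤ poch u i * poch v i * poch w i / (poch c i * poch d i * (i ! : ℝ)) * z1 ^ i * z2 ^ i := by
  apply mul_nonneg (mul_nonneg _ (pow_nonneg hz1 i)) (pow_nonneg hz2 i)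
  apply div_nonneg (mul_nonneg (mul_nonneg (poch_nonneg hu i) (poch_nonneg hv i)) (poch_nonneg hw i))
  exact mul_nonneg (mul_nonneg (poch_pos hc i).le (poch_pos hd i).le) (by positivity)

lemma bracket_abs_le (u v c z : ℝ) (hc : 0 < c) (m : ℕ) :
    |poch u m * poch v m / (poch c m * (m ! : ℝ)) * z ^ m| ≤
      poch |u| m * poch |v| m / (poch c m * (m ! : ℝ)) * |z| ^ m := by
  have hden : 0 < poch c m * (m ! : ℝ) := by
    have := poch_pos hc m; positivity
  rw [abs_mul, abs_div, abs_mul, abs_pow, abs_of_pos hden]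
  apply mul_le_mul_of_nonneg_right _ (pow_nonneg (abs_nonneg z) m)
  apply div_le_div_of_nonneg_right _ hden.le
  exact mul_le_mul (abs_poch_le u m) (abs_poch_le v m) (abs_nonneg _)
    (poch_nonneg (abs_nonneg u) m)

lemma bracket1_abs_le (u v w c d z1 z2 : ℝ) (hc : 0 < c) (hd : 0 < d) (i : ℕ) :
    |poch u i * poch v i * poch w i / (poch c i * poch d i * (i ! : ℝ)) * z1 ^ i * z2 ^ i| ≤
      poch |u| i * poch |v| i * poch |w| i / (poch c i * poch d i * (i ! : ℝ)) *
        |z1| ^ i * |z2| ^ i := by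
  have hden : 0 < poch c i * poch d i * (i ! : ℝ) := by
    have := poch_pos hc i; have := poch_pos hd i; positivity
  rw [abs_mul, abs_mul, abs_div, abs_mul, abs_mul, abs_pow, abs_pow, abs_of_pos hden]
  apply mul_le_mul_of_nonneg_right _ (pow_nonneg (abs_nonneg z2) i)
  apply mul_le_mul_of_nonneg_right _ (pow_nonneg (abs_nonneg z1) i)
  apply div_le_div_of_nonneg_right _ hden.le
  exact mul_le_mul (mul_le_mul (abs_poch_le u i) (abs_poch_le v i) (abs_nonneg _)
      (poch_nonneg (abs_nonneg u) i)) (abs_poch_le w i) (abs_nonneg _)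
    (mul_nonneg (poch_nonneg (abs_nonneg u) i) (poch_nonneg (abs_nonneg v) i))

lemma Tfun_abs_le {a b1 b2 c1 c2 x y : ℝ} (hc1 : 0 < c1) (hc2 : 0 < c2) (q : ℕ × ℕ × ℕ) :
    |Tfun a b1 b2 c1 c2 x y q| ≤ Tfun |a| |b1| |b2| c1 c2 |x| |y| q := by
  obtain ⟨i, m, n⟩ := q
  have hci : (0:ℝ) < c1 + i := by positivity
  have hdi : (0:ℝ) < c2 + i := by positivity
  rw [Tfun, Tfun]
  simp only
  rw [abs_mul, abs_mul]
  have h1 := bracket1_abs_le a b1 b2 c1 c2 x y hc1 hc2 i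
  have h2 := bracket_abs_le (a + i) (b1 + i) (c1 + i) x hci m
  have h3 := bracket_abs_le (a + i) (b2 + i) (c2 + i) y hdi n
  have e1 : poch |a + (i:ℝ)| m ≤ poch (|a| + i) m :=
    poch_le_poch (abs_nonneg _) (by
      have := abs_add_le a (i:ℝ); rwa [Nat.abs_cast] at this) m
  have e1' : poch |a + (i:ℝ)| n ≤ poch (|a| + i) n :=
    poch_le_poch (abs_nonneg _) (by
      have := abs_add_le a (i:ℝ); rwa [Nat.abs_cast] at this) n
  have e2 : poch |b1 + (i:ℝ)| m ≤ poch (|b1| + i) m :=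
    poch_le_poch (abs_nonneg _) (by
      have := abs_add_le b1 (i:ℝ); rwa [Nat.abs_cast] at this) m
  have e3 : poch |b2 + (i:ℝ)| n ≤ poch (|b2| + i) n :=
    poch_le_poch (abs_nonneg _) (by
      have := abs_add_le b2 (i:ℝ); rwa [Nat.abs_cast] at this) n
  have h2' : |poch (a + i) m * poch (b1 + i) m / (poch (c1 + i) m * (m ! : ℝ)) * x ^ m| ≤
      poch (|a| + i) m * poch (|b1| + i) m / (poch (c1 + i) m * (m ! : ℝ)) * |x| ^ m := by
    refine h2.trans ?_
    apply mul_le_mul_of_nonneg_right _ (pow_nonneg (abs_nonneg x) m)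
    apply div_le_div_of_nonneg_right _ (by have := poch_pos hci m; positivity : (0:ℝ) ≤ poch (c1+(i:ℝ)) m * (m ! : ℝ))
    exact mul_le_mul e1 e2 (poch_nonneg (abs_nonneg _) m) (poch_nonneg (by positivity) m)
  have h3' : |poch (a + i) n * poch (b2 + i) n / (poch (c2 + i) n * (n ! : ℝ)) * y ^ n| ≤
      poch (|a| + i) n * poch (|b2| + i) n / (poch (c2 + i) n * (n ! : ℝ)) * |y| ^ n := by
    refine h3.trans ?_
    apply mul_le_mul_of_nonneg_right _ (pow_nonneg (abs_nonneg y) n)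
    apply div_le_div_of_nonneg_right _ (by have := poch_pos hdi n; positivity : (0:ℝ) ≤ poch (c2+(i:ℝ)) n * (n ! : ℝ))
    exact mul_le_mul e1' e3 (poch_nonneg (abs_nonneg _) n) (poch_nonneg (by positivity) n)
  refine mul_le_mul (mul_le_mul h1 h2' (abs_nonneg _) ?_) h3' (abs_nonneg _) ?_
  · exact bracket1_nonneg (abs_nonneg a) (abs_nonneg b1) (abs_nonneg b2) hc1 hc2
      (abs_nonneg x) (abs_nonneg y) i
  · apply mul_nonneg
    · exact bracket1_nonneg (abs_nonneg a) (abs_nonneg b1) (abs_nonneg b2) hc1 hc2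
        (abs_nonneg x) (abs_nonneg y) i
    · exact bracket_nonneg (by positivity) (by positivity) hci (abs_nonneg x) m

lemma Tfun_hat_nonneg {a b1 b2 c1 c2 x y : ℝ} (hc1 : 0 < c1) (hc2 : 0 < c2) (q : ℕ × ℕ × ℕ) :
    0 ≤ Tfun |a| |b1| |b2| c1 c2 |x| |y| q := by
  obtain ⟨i, m, n⟩ := q
  rw [Tfun]
  simp only
  have hci : (0:ℝ) < c1 + i := by positivity
  have hdi : (0:ℝ) < c2 + i := by positivity
  refine mul_nonneg (mul_nonneg ?_ ?_) ?_
  · exact bracket1_nonneg (abs_nonneg a) (abs_nonneg b1) (abs_nonneg b2) hc1 hc2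
      (abs_nonneg x) (abs_nonneg y) i
  · exact bracket_nonneg (by positivity) (by positivity) hci (abs_nonneg x) m
  · exact bracket_nonneg (by positivity) (by positivity) hdi (abs_nonneg y) n


end AppellAux

end AppellAux

open AppellAux in
theorem appellF2_expansion (a b1 b2 c1 c2 : ℝ) (hc1 : 0 < c1) (hc2 : 0 < c2)
    (x y : ℝ) (hxy : |x| + |y| < 1) :
    Summable (fun p : ℕ × ℕ => |poch a (p.1 + p.2) * poch b1 p.1 * poch b2 p.2 /
      (poch c1 p.1 * poch c2 p.2 * (Nat.factorial p.1 : ℝ) * (Nat.factorial p.2 : ℝ)) *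
      x ^ p.1 * y ^ p.2|) ∧
    (∀ i : ℕ, Summable (fun n : ℕ => |poch (a + i) n * poch (b1 + i) n /
      (poch (c1 + i) n * (Nat.factorial n : ℝ)) * x ^ n|)) ∧
    (∀ i : ℕ, Summable (fun n : ℕ => |poch (a + i) n * poch (b2 + i) n /
      (poch (c2 + i) n * (Nat.factorial n : ℝ)) * y ^ n|)) ∧
    Summable (fun i : ℕ => |poch a i * poch b1 i * poch b2 i /
      (poch c1 i * poch c2 i * (Nat.factorial i : ℝ)) * x ^ i * y ^ i *
      gaussF (a + i) (b1 + i) (c1 + i) x * gaussF (a + i) (b2 + i) (c2 + i) y|) ∧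
    appellF2 a b1 b2 c1 c2 x y =
      ∑' i : ℕ, poch a i * poch b1 i * poch b2 i /
        (poch c1 i * poch c2 i * (Nat.factorial i : ℝ)) * x ^ i * y ^ i *
        gaussF (a + i) (b1 + i) (c1 + i) x * gaussF (a + i) (b2 + i) (c2 + i) y := by
  classical
  have hx0 := abs_nonneg x
  have hy0 := abs_nonneg y
  have hx1 : |x| < 1 := lt_of_le_of_lt (le_add_of_nonneg_right hy0) hxy
  have hy1 : |y| < 1 := lt_of_le_of_lt (le_add_of_nonneg_left hx0) hxy
  -- goals 2 and 3
  have G2 : ∀ i : ℕ, Summable (fun n : ℕ => |poch (a + i) n * poch (b1 + i) n /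
      (poch (c1 + i) n * (Nat.factorial n : ℝ)) * x ^ n|) := fun i =>
    gauss_summable (by positivity) hx1
  have G3 : ∀ i : ℕ, Summable (fun n : ℕ => |poch (a + i) n * poch (b2 + i) n /
      (poch (c2 + i) n * (Nat.factorial n : ℝ)) * y ^ n|) := fun i =>
    gauss_summable (by positivity) hy1
  -- dominating double series
  set F : ℕ × ℕ → ℝ := fun p => poch |a| (p.1 + p.2) * poch |b1| p.1 * poch |b2| p.2 /
      (poch c1 p.1 * poch c2 p.2 * (Nat.factorial p.1 : ℝ) * (Nat.factorial p.2 : ℝ)) * |x| ^ p.1 * |y| ^ p.2 with hF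
  have hFs : Summable F :=
    core (abs_nonneg a) (abs_nonneg b1) (abs_nonneg b2) hc1 hc2 hx0 hy0 hxy
  -- Goal 1
  have goal1 : Summable (fun p : ℕ × ℕ => |poch a (p.1 + p.2) * poch b1 p.1 * poch b2 p.2 /
      (poch c1 p.1 * poch c2 p.2 * (Nat.factorial p.1 : ℝ) * (Nat.factorial p.2 : ℝ)) *
      x ^ p.1 * y ^ p.2|) := by
    apply Summable.of_nonneg_of_le (fun p => abs_nonneg _) _ hFs
    rintro ⟨M, N⟩
    simp only [hF]
    have hden : 0 < poch c1 M * poch c2 N * (Nat.factorial M : ℝ) * (Nat.factorial N : ℝ) := by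
      have := poch_pos hc1 M; have := poch_pos hc2 N; positivity
    rw [abs_mul, abs_mul, abs_div, abs_mul, abs_mul, abs_pow, abs_pow, abs_of_pos hden]
    apply mul_le_mul_of_nonneg_right _ (pow_nonneg hy0 N)
    apply mul_le_mul_of_nonneg_right _ (pow_nonneg hx0 M)
    apply div_le_div_of_nonneg_right _ hden.le
    exact mul_le_mul (mul_le_mul (abs_poch_le a (M+N)) (abs_poch_le b1 M) (abs_nonneg _)
        (poch_nonneg (abs_nonneg a) (M+N))) (abs_poch_le b2 N) (abs_nonneg _)
      (mul_nonneg (poch_nonneg (abs_nonneg a) (M+N)) (poch_nonneg (abs_nonneg b1) M))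
  -- hatted U
  set Uh : (ℕ × ℕ) × ℕ → ℝ := Ufun |a| |b1| |b2| c1 c2 |x| |y| with hUh
  have hUhnn : ∀ p, 0 ≤ Uh p := by
    intro p
    rw [hUh, Ufun]
    split
    · exact Tfun_hat_nonneg hc1 hc2 _
    · exact le_refl 0
  have hUh_fib : ∀ p : ℕ × ℕ, Summable (fun i => Uh (p, i)) := by
    intro p
    apply summable_of_ne_finset_zero (s := Finset.range (p.2 + 1))
    intro i hi
    simp only [Finset.mem_range] at hi
    exact Ufun_eq_zero |a| |b1| |b2| c1 c2 |x| |y| p.1 p.2 i hi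
  have hUh_tsum : ∀ p : ℕ × ℕ, (∑' i, Uh (p, i)) = F p := by
    intro p
    rw [tsum_eq_sum (s := Finset.range (p.2 + 1)) (fun i hi => by
      simp only [Finset.mem_range] at hi
      exact Ufun_eq_zero |a| |b1| |b2| c1 c2 |x| |y| p.1 p.2 i hi)]
    exact fin_sum |a| |b1| |b2| c1 c2 |x| |y| hc1 hc2 p.1 p.2
  have hUhs : Summable Uh :=
    (summable_prod_of_nonneg hUhnn).2 ⟨hUh_fib, by
      refine Summable.congr hFs fun p => ?_
      exact (hUh_tsum p).symm⟩
  -- the actual U and T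
  set U : (ℕ × ℕ) × ℕ → ℝ := Ufun a b1 b2 c1 c2 x y with hU
  have hUabs : ∀ p, |U p| ≤ Uh p := by
    intro p
    rw [hU, hUh, Ufun, Ufun]
    split
    · exact Tfun_abs_le hc1 hc2 _
    · simp
  have hUabs_s : Summable (fun p => |U p|) :=
    Summable.of_nonneg_of_le (fun _ => abs_nonneg _) hUabs hUhs
  have hUs : Summable U := summable_abs_iff.mp hUabs_s
  set T : ℕ × ℕ × ℕ → ℝ := Tfun a b1 b2 c1 c2 x y with hT
  set φ : ℕ × ℕ × ℕ → (ℕ × ℕ) × ℕ := fun q => ((q.1 + q.2.1, q.1 + q.2.2), q.1) with hφ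
  have hφinj : Function.Injective φ := by
    rintro ⟨i, m, n⟩ ⟨i', m', n'⟩ h
    simp only [hφ, Prod.mk.injEq] at h
    obtain ⟨⟨h1, h2⟩, h3⟩ := h
    simp only [Prod.mk.injEq]
    omega
  have hTU : ∀ q, U (φ q) = T q := by
    rintro ⟨i, m, n⟩
    rw [hU, hT, Ufun]
    simp only [hφ]
    rw [if_pos ⟨Nat.le_add_right i m, Nat.le_add_right i n⟩]
    simp [Nat.add_sub_cancel_left]
  have hrange : ∀ p : (ℕ × ℕ) × ℕ, p ∉ Set.range φ → U p = 0 := by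
    rintro ⟨⟨M, N⟩, i⟩ hp
    rw [hU, Ufun, if_neg]
    rintro ⟨h1, h2⟩
    simp only [Prod.fst, Prod.snd] at h1 h2
    refine absurd ?_ hp
    refine ⟨(i, M - i, N - i), ?_⟩
    simp only [hφ]
    have e1 : i + (M - i) = M := by omega
    have e2 : i + (N - i) = N := by omega
    rw [e1, e2]
  have hTabs : Summable (fun q => |T q|) := by
    have h1 : Summable ((fun p => |U p|) ∘ φ) :=
      (Function.Injective.summable_iff hφinj (fun p hp => by
        rw [hrange p hp, abs_zero])).2 hUabs_s
    refine Summable.congr h1 fun q => ?_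
    simp only [Function.comp_apply, hTU q]
  have hTs : Summable T := summable_abs_iff.mp hTabs
  have hTabs_pair := (summable_prod_of_nonneg (f := fun q : ℕ × ℕ × ℕ => |T q|)
    (fun q => abs_nonneg _)).mp hTabs
  -- per-i factorization
  have hfact : ∀ i : ℕ, (∑' mn : ℕ × ℕ, T (i, mn)) =
      poch a i * poch b1 i * poch b2 i /
        (poch c1 i * poch c2 i * (Nat.factorial i : ℝ)) * x ^ i * y ^ i *
        gaussF (a + i) (b1 + i) (c1 + i) x * gaussF (a + i) (b2 + i) (c2 + i) y := by
    intro i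
    have hTi : Summable (fun mn : ℕ × ℕ => T (i, mn)) :=
      summable_abs_iff.mp (hTabs_pair.1 i)
    have hh : Summable (fun n : ℕ => poch (a + i) n * poch (b2 + i) n /
        (poch (c2 + i) n * (Nat.factorial n : ℝ)) * y ^ n) := summable_abs_iff.mp (G3 i)
    set C : ℝ := poch a i * poch b1 i * poch b2 i /
        (poch c1 i * poch c2 i * (Nat.factorial i : ℝ)) * x ^ i * y ^ i with hC
    set G1 : ℝ := gaussF (a + i) (b1 + i) (c1 + i) x with hG1
    set H : ℝ := gaussF (a + i) (b2 + i) (c2 + i) y with hH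
    have hHdef : H = ∑' n : ℕ, poch (a + i) n * poch (b2 + i) n /
        (poch (c2 + i) n * (Nat.factorial n : ℝ)) * y ^ n := rfl
    have hG1def : G1 = ∑' m : ℕ, poch (a + i) m * poch (b1 + i) m /
        (poch (c1 + i) m * (Nat.factorial m : ℝ)) * x ^ m := rfl
    have hTdef : ∀ m n : ℕ, T (i, m, n) =
        (C * (poch (a + i) m * poch (b1 + i) m /
          (poch (c1 + i) m * (Nat.factorial m : ℝ)) * x ^ m)) *
        (poch (a + i) n * poch (b2 + i) n /
          (poch (c2 + i) n * (Nat.factorial n : ℝ)) * y ^ n) := fun m n => rfl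
    have hstep : ∀ m : ℕ, (∑' n : ℕ, T (i, m, n)) =
        (C * (poch (a + i) m * poch (b1 + i) m /
          (poch (c1 + i) m * (Nat.factorial m : ℝ)) * x ^ m)) * H := by
      intro m
      rw [tsum_congr (hTdef m), tsum_mul_left, hHdef]
    have hfib2 : ∀ m : ℕ, Summable (fun n : ℕ => T (i, m, n)) := by
      intro m
      rw [show (fun n : ℕ => T (i, m, n)) = fun n =>
        (C * (poch (a + i) m * poch (b1 + i) m /
          (poch (c1 + i) m * (Nat.factorial m : ℝ)) * x ^ m)) *
        (poch (a + i) n * poch (b2 + i) n /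
          (poch (c2 + i) n * (Nat.factorial n : ℝ)) * y ^ n) from funext fun n => hTdef m n]
      exact hh.mul_left _
    rw [Summable.tsum_prod' hTi hfib2, tsum_congr hstep]
    have hswap : ∀ m : ℕ, (C * (poch (a + i) m * poch (b1 + i) m /
          (poch (c1 + i) m * (Nat.factorial m : ℝ)) * x ^ m)) * H =
        (C * H) * (poch (a + i) m * poch (b1 + i) m /
          (poch (c1 + i) m * (Nat.factorial m : ℝ)) * x ^ m) := fun m => by ring
    rw [tsum_congr hswap, tsum_mul_left, ← hG1def]
    ring
  -- Goal 4
  have goal4 : Summable (fun i : ℕ => |poch a i * poch b1 i * poch b2 i /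
      (poch c1 i * poch c2 i * (Nat.factorial i : ℝ)) * x ^ i * y ^ i *
      gaussF (a + i) (b1 + i) (c1 + i) x * gaussF (a + i) (b2 + i) (c2 + i) y|) := by
    apply Summable.of_nonneg_of_le (fun _ => abs_nonneg _) _ hTabs_pair.2
    intro i
    rw [← hfact i]
    have := norm_tsum_le_tsum_norm (f := fun mn : ℕ × ℕ => T (i, mn)) (by
      simpa [Real.norm_eq_abs] using hTabs_pair.1 i)
    simpa [Real.norm_eq_abs] using this
  -- Goal 5
  have goal5 : appellF2 a b1 b2 c1 c2 x y = ∑' i : ℕ, poch a i * poch b1 i * poch b2 i /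
      (poch c1 i * poch c2 i * (Nat.factorial i : ℝ)) * x ^ i * y ^ i *
      gaussF (a + i) (b1 + i) (c1 + i) x * gaussF (a + i) (b2 + i) (c2 + i) y := by
    rw [appellF2]
    have h1 : ∀ p : ℕ × ℕ, poch a (p.1 + p.2) * poch b1 p.1 * poch b2 p.2 /
        (poch c1 p.1 * poch c2 p.2 * (Nat.factorial p.1 : ℝ) * (Nat.factorial p.2 : ℝ)) *
        x ^ p.1 * y ^ p.2 = ∑' i, U (p, i) := by
      intro p
      rw [tsum_eq_sum (s := Finset.range (p.2 + 1)) (fun i hi => by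
        simp only [Finset.mem_range] at hi
        exact Ufun_eq_zero a b1 b2 c1 c2 x y p.1 p.2 i hi)]
      exact (fin_sum a b1 b2 c1 c2 x y hc1 hc2 p.1 p.2).symm
    have hUfib : ∀ p : ℕ × ℕ, Summable (fun i => U (p, i)) := by
      intro p
      apply summable_of_ne_finset_zero (s := Finset.range (p.2 + 1))
      intro i hi
      simp only [Finset.mem_range] at hi
      exact Ufun_eq_zero a b1 b2 c1 c2 x y p.1 p.2 i hi
    calc (∑' p : ℕ × ℕ, poch a (p.1 + p.2) * poch b1 p.1 * poch b2 p.2 /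
          (poch c1 p.1 * poch c2 p.2 * (Nat.factorial p.1 : ℝ) * (Nat.factorial p.2 : ℝ)) *
          x ^ p.1 * y ^ p.2)
        = ∑' p : ℕ × ℕ, ∑' i, U (p, i) := tsum_congr h1
      _ = ∑' pq : (ℕ × ℕ) × ℕ, U pq := by
          rw [Summable.tsum_prod' hUs (fun p => hUfib p)]
      _ = ∑' q : ℕ × ℕ × ℕ, T q := by
          rw [← Function.Injective.tsum_eq hφinj (f := U) (fun p hp => by
            by_contra hnr
            exact hp (hrange p hnr))]
          exact tsum_congr hTU
      _ = ∑' i : ℕ, ∑' mn : ℕ × ℕ, T (i, mn) := by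
          rw [Summable.tsum_prod' hTs (fun i => summable_abs_iff.mp (hTabs_pair.1 i))]
      _ = _ := tsum_congr hfact
  exact ⟨goal1, G2, G3, goal4, goal5⟩
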